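/- arXiv:0806.1360 — 3 statements merged into one kernel-verified Lean document; each statement's English description precedes it below -/
import Mathlib

section
/- Let κ, τ, θ : ℝ² → ℝ be smooth (C^∞) functions of (t,x) with κ(t,x) > 0 for all (t,x), satisfying ∂_x θ = -τ, ∂_t θ = -(∂_x²κ/κ - τ² + (1/2)κ²), and the vortex-filament (Heisenberg flow) curvature equation ∂_t κ = -κ ∂_x τ - 2 (∂_x κ) τ. Then the complex-valued function u(t,x) := κ(t,x) e^{-iθ(t,x)} (the Hasimoto transformation) satisfies the focusing nonlinear Schrödinger equation -i ∂_t u = ∂_x² u + (1/2)|u|² u. -/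
noncomputable section

/-- Partial derivative with respect to the first variable `t`. -/
def pt {E : Type*} [NormedAddCommGroup E] [NormedSpace ℝ E]
    (f : ℝ × ℝ → E) : ℝ × ℝ → E := fun p => deriv (fun s => f (s, p.2)) p.1

/-- Partial derivative with respect to the second variable `x`. -/
def px {E : Type*} [NormedAddCommGroup E] [NormedSpace ℝ E]
    (f : ℝ × ℝ → E) : ℝ × ℝ → E := fun p => deriv (fun s => f (p.1, s)) p.2

section aux

variable {E : Type*} [NormedAddCommGroup E] [NormedSpace ℝ E]

lemma hasDerivAt_px (f : ℝ × ℝ → E) (hf : Differentiable ℝ f) (p : ℝ × ℝ) :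
    HasDerivAt (fun s => f (p.1, s)) (px f p) p.2 := by
  have h : DifferentiableAt ℝ (fun s => f (p.1, s)) p.2 :=
    (hf (p.1, p.2)).comp p.2 ((differentiableAt_const p.1).prodMk differentiableAt_id)
  exact h.hasDerivAt

lemma hasDerivAt_pt (f : ℝ × ℝ → E) (hf : Differentiable ℝ f) (p : ℝ × ℝ) :
    HasDerivAt (fun s => f (s, p.2)) (pt f p) p.1 := by
  have h : DifferentiableAt ℝ (fun s => f (s, p.2)) p.1 :=
    (hf (p.1, p.2)).comp p.1 (differentiableAt_id.prodMk (differentiableAt_const p.2))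
  exact h.hasDerivAt

lemma px_fderiv (f : ℝ × ℝ → E) (hf : Differentiable ℝ f) (p : ℝ × ℝ) :
    px f p = fderiv ℝ f p ((0 : ℝ), (1 : ℝ)) := by
  have h1 : HasDerivAt (fun s : ℝ => ((p.1, s) : ℝ × ℝ)) ((0 : ℝ), (1 : ℝ)) p.2 :=
    (hasDerivAt_const p.2 p.1).prodMk (hasDerivAt_id p.2)
  exact ((hf p).hasFDerivAt.comp_hasDerivAt p.2 h1).deriv

lemma contDiff_px (f : ℝ × ℝ → E) (hf : ContDiff ℝ (⊤ : ℕ∞) f) :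
    ContDiff ℝ (⊤ : ℕ∞) (px f) := by
  have h : px f = fun p => fderiv ℝ f p ((0 : ℝ), (1 : ℝ)) :=
    funext fun p => px_fderiv f (hf.differentiable (by simp)) p
  rw [h]
  exact (hf.fderiv_right (by exact_mod_cast le_top)).clm_apply contDiff_const

end aux

open Complex in
lemma px_mul_exp (g : ℝ × ℝ → ℂ) (θ : ℝ × ℝ → ℝ)
    (hg : Differentiable ℝ g) (hθ : Differentiable ℝ θ) (p : ℝ × ℝ) :
    px (fun q => g q * Complex.exp (-Complex.I * (θ q : ℂ))) p
      = (px g p + g p * (-Complex.I * ((px θ p : ℝ) : ℂ)))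
          * Complex.exp (-Complex.I * (θ p : ℂ)) := by
  have hgx := hasDerivAt_px g hg p
  have hθx := (hasDerivAt_px θ hθ p).ofReal_comp
  have h2 : HasDerivAt (fun s => Complex.exp (-Complex.I * (θ (p.1, s) : ℂ)))
      (Complex.exp (-Complex.I * (θ p : ℂ)) * (-Complex.I * ((px θ p : ℝ) : ℂ))) p.2 := by
    simpa using (hθx.const_mul (-Complex.I)).cexp
  have h3 := hgx.mul h2
  have h4 : px (fun q => g q * Complex.exp (-Complex.I * (θ q : ℂ))) p
      = px g p * Complex.exp (-Complex.I * (θ p : ℂ))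
        + g p * (Complex.exp (-Complex.I * (θ p : ℂ)) * (-Complex.I * ((px θ p : ℝ) : ℂ))) :=
    h3.deriv
  rw [h4]; ring

open Complex in
lemma pt_mul_exp (g : ℝ × ℝ → ℂ) (θ : ℝ × ℝ → ℝ)
    (hg : Differentiable ℝ g) (hθ : Differentiable ℝ θ) (p : ℝ × ℝ) :
    pt (fun q => g q * Complex.exp (-Complex.I * (θ q : ℂ))) p
      = (pt g p + g p * (-Complex.I * ((pt θ p : ℝ) : ℂ)))
          * Complex.exp (-Complex.I * (θ p : ℂ)) := by
  have hgt := hasDerivAt_pt g hg p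
  have hθt := (hasDerivAt_pt θ hθ p).ofReal_comp
  have h2 : HasDerivAt (fun s => Complex.exp (-Complex.I * (θ (s, p.2) : ℂ)))
      (Complex.exp (-Complex.I * (θ p : ℂ)) * (-Complex.I * ((pt θ p : ℝ) : ℂ))) p.1 := by
    simpa using (hθt.const_mul (-Complex.I)).cexp
  have h3 := hgt.mul h2
  have h4 : pt (fun q => g q * Complex.exp (-Complex.I * (θ q : ℂ))) p
      = pt g p * Complex.exp (-Complex.I * (θ p : ℂ))
        + g p * (Complex.exp (-Complex.I * (θ p : ℂ)) * (-Complex.I * ((pt θ p : ℝ) : ℂ))) :=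
    h3.deriv
  rw [h4]; ring

lemma px_ofReal (f : ℝ × ℝ → ℝ) (hf : Differentiable ℝ f) (p : ℝ × ℝ) :
    px (fun q => ((f q : ℂ))) p = ((px f p : ℝ) : ℂ) :=
  (hasDerivAt_px f hf p).ofReal_comp.deriv

lemma pt_ofReal (f : ℝ × ℝ → ℝ) (hf : Differentiable ℝ f) (p : ℝ × ℝ) :
    pt (fun q => ((f q : ℂ))) p = ((pt f p : ℝ) : ℂ) :=
  (hasDerivAt_pt f hf p).ofReal_comp.deriv

/-- The Hasimoto transformation `u = κ e^{-iθ}` maps solutions of the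
vortex-filament (Heisenberg flow) curvature/torsion equations to solutions of
the focusing nonlinear Schrödinger equation `-i u_t = u_xx + (1/2)|u|² u`. -/
theorem hasimoto_transformation_NLS
    (κ τ θ : ℝ × ℝ → ℝ)
    (hκ : ContDiff ℝ (⊤ : ℕ∞) κ) (hτ : ContDiff ℝ (⊤ : ℕ∞) τ)
    (hθ : ContDiff ℝ (⊤ : ℕ∞) θ)
    (hκpos : ∀ p, 0 < κ p)
    (hθx : ∀ p, px θ p = -τ p)
    (hθt : ∀ p, pt θ p = -(px (px κ) p / κ p - (τ p) ^ 2 + (1 / 2) * (κ p) ^ 2))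
    (hκt : ∀ p, pt κ p = -(κ p) * px τ p - 2 * (px κ p) * τ p)
    (u : ℝ × ℝ → ℂ)
    (hu : ∀ p, u p = (κ p : ℂ) * Complex.exp (-Complex.I * (θ p : ℂ))) :
    ∀ p, -Complex.I * pt u p
      = px (px u) p + (1 / 2) * (‖u p‖ : ℂ) ^ 2 * u p := by
  have hκd : Differentiable ℝ κ := hκ.differentiable (by simp)
  have hτd : Differentiable ℝ τ := hτ.differentiable (by simp)
  have hθd : Differentiable ℝ θ := hθ.differentiable (by simp)
  have hκxd : Differentiable ℝ (px κ) := (contDiff_px κ hκ).differentiable (by simp)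
  have hUeq : u = fun q => (κ q : ℂ) * Complex.exp (-Complex.I * (θ q : ℂ)) :=
    funext hu
  have hκC : Differentiable ℝ (fun q => ((κ q : ℝ) : ℂ)) :=
    Complex.ofRealCLM.differentiable.comp hκd
  -- first x-derivative
  have hpxu : px u = fun q =>
      (((px κ q : ℝ) : ℂ) + Complex.I * ((κ q : ℂ) * (τ q : ℂ)))
        * Complex.exp (-Complex.I * (θ q : ℂ)) := by
    funext q
    rw [hUeq, px_mul_exp _ θ hκC hθd q, px_ofReal κ hκd q, hθx q]
    push_cast
    ring
  -- the coefficient g of the first derivative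
  set g : ℝ × ℝ → ℂ := fun q =>
    (((px κ q : ℝ) : ℂ) + Complex.I * ((κ q : ℂ) * (τ q : ℂ))) with hg
  have hgd : Differentiable ℝ g := by
    apply Differentiable.add
    · exact Complex.ofRealCLM.differentiable.comp hκxd
    · exact (differentiable_const _).mul
        ((Complex.ofRealCLM.differentiable.comp hκd).mul
          (Complex.ofRealCLM.differentiable.comp hτd))
  -- derivative of g in x
  have hpxg : ∀ q, px g q
      = ((px (px κ) q : ℝ) : ℂ)
        + Complex.I * (((px κ q : ℝ) : ℂ) * (τ q : ℂ) + (κ q : ℂ) * ((px τ q : ℝ) : ℂ)) := by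
    intro q
    have h1 := (hasDerivAt_px (px κ) hκxd q).ofReal_comp
    have h2 := ((hasDerivAt_px κ hκd q).ofReal_comp.mul
      (hasDerivAt_px τ hτd q).ofReal_comp).const_mul Complex.I
    have h3 := h1.add h2
    have := h3.deriv
    rw [show px g q = deriv (fun s => ((px κ (q.1, s) : ℝ) : ℂ)
        + Complex.I * ((κ (q.1, s) : ℂ) * (τ (q.1, s) : ℂ))) q.2 from rfl]; exact this
  -- second x-derivative
  have hpxxu : ∀ q, px (px u) q
      = (px g q + g q * (-Complex.I * ((-τ q : ℝ) : ℂ)))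
          * Complex.exp (-Complex.I * (θ q : ℂ)) := by
    intro q
    rw [hpxu, px_mul_exp g θ hgd hθd q, hθx q]
  -- t-derivative
  have hptu : pt u = fun q =>
      (((pt κ q : ℝ) : ℂ) + (κ q : ℂ) * (-Complex.I * ((pt θ q : ℝ) : ℂ)))
        * Complex.exp (-Complex.I * (θ q : ℂ)) := by
    funext q
    rw [hUeq, pt_mul_exp _ θ hκC hθd q, pt_ofReal κ hκd q]
  intro p
  have hκ0 : (κ p : ℝ) ≠ 0 := (hκpos p).ne'
  -- modulus of u
  have habs : (‖u p‖ : ℂ) = (κ p : ℂ) := by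
    rw [hu p, norm_mul, Complex.norm_exp, Complex.norm_real, Real.norm_eq_abs,
      abs_of_pos (hκpos p)]
    norm_num [Complex.mul_re]
  -- cleaned form of the θ_t equation
  have Hθt : (κ p) * pt θ p
      = -(px (px κ) p - κ p * (τ p) ^ 2 + (1 / 2) * (κ p) ^ 3) := by
    rw [hθt p]; field_simp
  have H1 : ((κ p : ℝ) : ℂ) * ((pt θ p : ℝ) : ℂ)
      = -(((px (px κ) p : ℝ) : ℂ) - (κ p : ℂ) * ((τ p : ℝ) : ℂ) ^ 2
          + (1 / 2) * ((κ p : ℝ) : ℂ) ^ 3) := by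
    have h := congrArg (fun x : ℝ => (x : ℂ)) Hθt
    push_cast at h
    linear_combination h
  have H2 : ((pt κ p : ℝ) : ℂ)
      = -((κ p : ℝ) : ℂ) * ((px τ p : ℝ) : ℂ)
        - 2 * ((px κ p : ℝ) : ℂ) * ((τ p : ℝ) : ℂ) := by
    have h := congrArg (fun x : ℝ => (x : ℂ)) (hκt p)
    push_cast at h
    linear_combination h
  rw [hptu, hpxxu p, hpxg p, habs, hu p, hg]
  push_cast
  set E := Complex.exp (-Complex.I * (θ p : ℂ))
  linear_combination (-E) * H1 + (-Complex.I * E) * H2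
    + ((((κ p : ℝ) : ℂ) * ((pt θ p : ℝ) : ℂ)
        - ((κ p : ℝ) : ℂ) * ((τ p : ℝ) : ℂ) ^ 2) * E) * Complex.I_sq
end
end

section
/- Let T, N, B : ℝ² → ℝ³ be smooth (C^∞) maps of (t,x) that are orthonormal at every point with B = T × N, and let κ, τ : ℝ² → ℝ be smooth with κ(t,x) > 0, satisfying the Serret–Frenet equations ∂_x T = κN, ∂_x N = -κT + τB, ∂_x B = -τN at every (t,x). Suppose the tangent vector evolves as ∂_t T = f̂₁ N + f̂₂ B for smooth functions f̂₁, f̂₂ : ℝ² → ℝ. Then the curvature and torsion evolve according to ∂_t κ = ∂_x f̂₁ - τ f̂₂ and ∂_t τ = ∂_x( κ^{-1}(∂_x f̂₂ + τ f̂₁) ) + κ f̂₂. -/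
noncomputable section

/-- Euclidean dot product on `ℝ³`. -/
def dot3 (a b : Fin 3 → ℝ) : ℝ := a 0 * b 0 + a 1 * b 1 + a 2 * b 2

/-- Cross product on `ℝ³`. -/
def cross3 (a b : Fin 3 → ℝ) : Fin 3 → ℝ :=
  ![a 1 * b 2 - a 2 * b 1, a 2 * b 0 - a 0 * b 2, a 0 * b 1 - a 1 * b 0]

section helpers

variable {E : Type*} [NormedAddCommGroup E] [NormedSpace ℝ E]

lemma dot3_comm (a b : Fin 3 → ℝ) : dot3 a b = dot3 b a := by
  simp only [dot3]; ring

lemma dot3_add_left (a b c : Fin 3 → ℝ) : dot3 (a + b) c = dot3 a c + dot3 b c := by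
  simp only [dot3, Pi.add_apply]; ring

lemma dot3_smul_left (r : ℝ) (a b : Fin 3 → ℝ) : dot3 (r • a) b = r * dot3 a b := by
  simp only [dot3, Pi.smul_apply, smul_eq_mul]; ring

lemma dot3_neg_left (a b : Fin 3 → ℝ) : dot3 (-a) b = -dot3 a b := by
  simp only [dot3, Pi.neg_apply]; ring

lemma dot3_smul_right (r : ℝ) (a b : Fin 3 → ℝ) : dot3 a (r • b) = r * dot3 a b := by
  simp only [dot3, Pi.smul_apply, smul_eq_mul]; ring

lemma slice_x_hasDerivAt {F : ℝ × ℝ → E} (hF : ContDiff ℝ (⊤ : ℕ∞) F) (p : ℝ × ℝ) :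
    HasDerivAt (fun s => F (p.1, s)) (px F p) p.2 := by
  have h : Differentiable ℝ (fun s : ℝ => F (p.1, s)) :=
    (hF.differentiable (by simp)).comp ((differentiable_const _).prodMk differentiable_id)
  exact (h p.2).hasDerivAt

lemma slice_t_hasDerivAt {F : ℝ × ℝ → E} (hF : ContDiff ℝ (⊤ : ℕ∞) F) (p : ℝ × ℝ) :
    HasDerivAt (fun s => F (s, p.2)) (pt F p) p.1 := by
  have h : Differentiable ℝ (fun s : ℝ => F (s, p.2)) :=
    (hF.differentiable (by simp)).comp (differentiable_id.prodMk (differentiable_const _))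
  exact (h p.1).hasDerivAt

lemma px_eq_fderiv {F : ℝ × ℝ → E} (hF : ContDiff ℝ (⊤ : ℕ∞) F) (p : ℝ × ℝ) :
    px F p = fderiv ℝ F p (0, 1) := by
  have h1 : HasDerivAt (fun s : ℝ => ((p.1, s) : ℝ × ℝ)) ((0 : ℝ), (1 : ℝ)) p.2 :=
    (hasDerivAt_const _ _).prodMk (hasDerivAt_id _)
  have h2 : HasDerivAt (fun s => F (p.1, s)) (fderiv ℝ F p ((0 : ℝ), (1 : ℝ))) p.2 :=
    ((hF.differentiable (by simp)) p).hasFDerivAt.comp_hasDerivAt p.2 h1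
  exact h2.deriv

lemma pt_eq_fderiv {F : ℝ × ℝ → E} (hF : ContDiff ℝ (⊤ : ℕ∞) F) (p : ℝ × ℝ) :
    pt F p = fderiv ℝ F p (1, 0) := by
  have h1 : HasDerivAt (fun s : ℝ => ((s, p.2) : ℝ × ℝ)) ((1 : ℝ), (0 : ℝ)) p.1 :=
    (hasDerivAt_id _).prodMk (hasDerivAt_const _ _)
  have h2 : HasDerivAt (fun s => F (s, p.2)) (fderiv ℝ F p ((1 : ℝ), (0 : ℝ))) p.1 :=
    ((hF.differentiable (by simp)) p).hasFDerivAt.comp_hasDerivAt p.1 h1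
  exact h2.deriv

lemma contDiff_px_s2 {F : ℝ × ℝ → E} (hF : ContDiff ℝ (⊤ : ℕ∞) F) :
    ContDiff ℝ (⊤ : ℕ∞) (px F) := by
  have h : px F = fun p => fderiv ℝ F p (0, 1) := funext fun p => px_eq_fderiv hF p
  rw [h]
  exact (hF.fderiv_right (by exact_mod_cast le_top)).clm_apply contDiff_const

lemma contDiff_pt {F : ℝ × ℝ → E} (hF : ContDiff ℝ (⊤ : ℕ∞) F) :
    ContDiff ℝ (⊤ : ℕ∞) (pt F) := by
  have h : pt F = fun p => fderiv ℝ F p (1, 0) := funext fun p => pt_eq_fderiv hF p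
  rw [h]
  exact (hF.fderiv_right (by exact_mod_cast le_top)).clm_apply contDiff_const

lemma pt_px_comm {F : ℝ × ℝ → E} (hF : ContDiff ℝ (⊤ : ℕ∞) F) (p : ℝ × ℝ) :
    pt (px F) p = px (pt F) p := by
  have hd := hF.differentiable (by simp)
  have hf' : ContDiff ℝ (⊤ : ℕ∞) (fderiv ℝ F) := hF.fderiv_right (by exact_mod_cast le_top)
  have hx : HasFDerivAt (fderiv ℝ F) (fderiv ℝ (fderiv ℝ F) p) p :=
    (hf'.differentiable (by simp) p).hasFDerivAt
  have hsymm := second_derivative_symmetric (fun y => (hd y).hasFDerivAt) hx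
    ((1 : ℝ), (0 : ℝ)) ((0 : ℝ), (1 : ℝ))
  have key : ∀ v w : ℝ × ℝ,
      fderiv ℝ (fun q => fderiv ℝ F q w) p v = fderiv ℝ (fderiv ℝ F) p v w := by
    intro v w
    have h : HasFDerivAt (fun q => fderiv ℝ F q w)
        ((ContinuousLinearMap.apply ℝ E w).comp (fderiv ℝ (fderiv ℝ F) p)) p :=
      (ContinuousLinearMap.apply ℝ E w).hasFDerivAt.comp p hx
    rw [h.fderiv]; rfl
  have e1 : pt (px F) p = fderiv ℝ (fderiv ℝ F) p (1, 0) (0, 1) := by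
    rw [pt_eq_fderiv (contDiff_px_s2 hF) p]
    have h : px F = fun q => fderiv ℝ F q (0, 1) := funext fun q => px_eq_fderiv hF q
    rw [h, key (1, 0) (0, 1)]
  have e2 : px (pt F) p = fderiv ℝ (fderiv ℝ F) p (0, 1) (1, 0) := by
    rw [px_eq_fderiv (contDiff_pt hF) p]
    have h : pt F = fun q => fderiv ℝ F q (1, 0) := funext fun q => pt_eq_fderiv hF q
    rw [h, key (0, 1) (1, 0)]
  rw [e1, e2, hsymm]

lemma HasDerivAt.dot3' {u v : ℝ → Fin 3 → ℝ} {u' v' : Fin 3 → ℝ} {s : ℝ}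
    (hu : HasDerivAt u u' s) (hv : HasDerivAt v v' s) :
    HasDerivAt (fun r => dot3 (u r) (v r)) (dot3 u' (v s) + dot3 (u s) v') s := by
  have hui : ∀ i, HasDerivAt (fun r => u r i) (u' i) s := hasDerivAt_pi.mp hu
  have hvi : ∀ i, HasDerivAt (fun r => v r i) (v' i) s := hasDerivAt_pi.mp hv
  have h2 := (((hui 0).mul (hvi 0)).add ((hui 1).mul (hvi 1))).add ((hui 2).mul (hvi 2))
  simp only [dot3]
  refine h2.congr_deriv ?_
  ring

lemma px_dot3 {F G : ℝ × ℝ → Fin 3 → ℝ} (hF : ContDiff ℝ (⊤ : ℕ∞) F)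
    (hG : ContDiff ℝ (⊤ : ℕ∞) G) (p : ℝ × ℝ) :
    px (fun q => dot3 (F q) (G q)) p = dot3 (px F p) (G p) + dot3 (F p) (px G p) :=
  ((slice_x_hasDerivAt hF p).dot3' (slice_x_hasDerivAt hG p)).deriv

lemma pt_dot3 {F G : ℝ × ℝ → Fin 3 → ℝ} (hF : ContDiff ℝ (⊤ : ℕ∞) F)
    (hG : ContDiff ℝ (⊤ : ℕ∞) G) (p : ℝ × ℝ) :
    pt (fun q => dot3 (F q) (G q)) p = dot3 (pt F p) (G p) + dot3 (F p) (pt G p) :=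
  ((slice_t_hasDerivAt hF p).dot3' (slice_t_hasDerivAt hG p)).deriv

lemma pt_smul {c : ℝ × ℝ → ℝ} {F : ℝ × ℝ → E} (hc : ContDiff ℝ (⊤ : ℕ∞) c)
    (hF : ContDiff ℝ (⊤ : ℕ∞) F) (p : ℝ × ℝ) :
    pt (fun q => c q • F q) p = c p • pt F p + pt c p • F p :=
  ((slice_t_hasDerivAt hc p).smul (slice_t_hasDerivAt hF p)).deriv

lemma px_smul_add_smul {c d : ℝ × ℝ → ℝ} {F G : ℝ × ℝ → E}
    (hc : ContDiff ℝ (⊤ : ℕ∞) c) (hF : ContDiff ℝ (⊤ : ℕ∞) F)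
    (hd : ContDiff ℝ (⊤ : ℕ∞) d) (hG : ContDiff ℝ (⊤ : ℕ∞) G) (p : ℝ × ℝ) :
    px (fun q => c q • F q + d q • G q) p
      = (c p • px F p + px c p • F p) + (d p • px G p + px d p • G p) :=
  (((slice_x_hasDerivAt hc p).smul (slice_x_hasDerivAt hF p)).add
    ((slice_x_hasDerivAt hd p).smul (slice_x_hasDerivAt hG p))).deriv

end helpers

/-- For a moving Frenet frame evolving as `T_t = f̂₁ N + f̂₂ B`, the curvature and
torsion evolve by `κ_t = ∂_x f̂₁ - τ f̂₂` and `τ_t = ∂_x(κ⁻¹(∂_x f̂₂ + τ f̂₁)) + κ f̂₂`. -/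
theorem frenet_curvature_torsion_evolution
    (T N B : ℝ × ℝ → Fin 3 → ℝ) (κ τ f₁ f₂ : ℝ × ℝ → ℝ)
    (hT : ContDiff ℝ (⊤ : ℕ∞) T) (hN : ContDiff ℝ (⊤ : ℕ∞) N)
    (hB : ContDiff ℝ (⊤ : ℕ∞) B)
    (hκ : ContDiff ℝ (⊤ : ℕ∞) κ) (hτ : ContDiff ℝ (⊤ : ℕ∞) τ)
    (hf₁ : ContDiff ℝ (⊤ : ℕ∞) f₁) (hf₂ : ContDiff ℝ (⊤ : ℕ∞) f₂)
    (horthTT : ∀ p, dot3 (T p) (T p) = 1)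
    (horthNN : ∀ p, dot3 (N p) (N p) = 1)
    (horthBB : ∀ p, dot3 (B p) (B p) = 1)
    (horthTN : ∀ p, dot3 (T p) (N p) = 0)
    (horthTB : ∀ p, dot3 (T p) (B p) = 0)
    (horthNB : ∀ p, dot3 (N p) (B p) = 0)
    (hBTN : ∀ p, B p = cross3 (T p) (N p))
    (hκpos : ∀ p, 0 < κ p)
    (hTx : ∀ p, px T p = κ p • N p)
    (hNx : ∀ p, px N p = (-κ p) • T p + τ p • B p)
    (hBx : ∀ p, px B p = (-τ p) • N p)
    (hTt : ∀ p, pt T p = f₁ p • N p + f₂ p • B p) :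
    (∀ p, pt κ p = px f₁ p - τ p * f₂ p) ∧
    (∀ p, pt τ p = px (fun q => (κ q)⁻¹ * (px f₂ q + τ q * f₁ q)) p
        + κ p * f₂ p) := by
  have hpxT : ContDiff ℝ (⊤ : ℕ∞) (px T) := contDiff_px_s2 hT
  have hpxN : ContDiff ℝ (⊤ : ℕ∞) (px N) := contDiff_px_s2 hN
  have hptN : ContDiff ℝ (⊤ : ℕ∞) (pt N) := contDiff_pt hN
  -- simple dot3 facts with the Frenet equations
  have horthBN : ∀ p, dot3 (B p) (N p) = 0 := fun p => (dot3_comm _ _).trans (horthNB p)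
  have horthNT : ∀ p, dot3 (N p) (T p) = 0 := fun p => (dot3_comm _ _).trans (horthTN p)
  have horthBT : ∀ p, dot3 (B p) (T p) = 0 := fun p => (dot3_comm _ _).trans (horthTB p)
  have hNxB : ∀ q, dot3 (px N q) (B q) = τ q := by
    intro q
    rw [hNx q]
    simp [dot3_add_left, dot3_smul_left, dot3_neg_left, horthTB, horthBB]
  have hNxN : ∀ q, dot3 (px N q) (N q) = 0 := by
    intro q
    rw [hNx q]
    simp [dot3_add_left, dot3_smul_left, dot3_neg_left, horthTN, horthBN]
  have hBxB : ∀ q, dot3 (px B q) (B q) = 0 := by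
    intro q
    rw [hBx q]
    simp [dot3_smul_left, dot3_neg_left, horthNB]
  have hBxN : ∀ q, dot3 (px B q) (N q) = -τ q := by
    intro q
    rw [hBx q]
    simp [dot3_smul_left, dot3_neg_left, horthNN]
  -- derivative-of-constant facts in t
  have hNtN : ∀ p, dot3 (pt N p) (N p) = 0 := by
    intro p
    have h := pt_dot3 hN hN p
    have hc : pt (fun q => dot3 (N q) (N q)) p = 0 := by
      have he : (fun q => dot3 (N q) (N q)) = fun _ => (1 : ℝ) := funext horthNN
      rw [he]
      exact deriv_const _ _
    rw [hc] at h
    have h2 := dot3_comm (N p) (pt N p)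
    linarith
  have hBtB : ∀ p, dot3 (B p) (pt B p) = 0 := by
    intro p
    have h := pt_dot3 hB hB p
    have hc : pt (fun q => dot3 (B q) (B q)) p = 0 := by
      have he : (fun q => dot3 (B q) (B q)) = fun _ => (1 : ℝ) := funext horthBB
      rw [he]
      exact deriv_const _ _
    rw [hc] at h
    have h2 := dot3_comm (B p) (pt B p)
    linarith
  have hTtB : ∀ p, dot3 (pt T p) (B p) = f₂ p := by
    intro p
    rw [hTt p]
    simp [dot3_add_left, dot3_smul_left, horthNB, horthBB]
  have hTBt : ∀ p, dot3 (T p) (pt B p) = -f₂ p := by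
    intro p
    have h := pt_dot3 hT hB p
    have hc : pt (fun q => dot3 (T q) (B q)) p = 0 := by
      have he : (fun q => dot3 (T q) (B q)) = fun _ => (0 : ℝ) := funext horthTB
      rw [he]
      exact deriv_const _ _
    rw [hc, hTtB p] at h
    linarith
  -- key identity : κ * (Nt · B) = px f₂ + τ f₁
  have hκg : ∀ q, κ q * dot3 (pt N q) (B q) = px f₂ q + τ q * f₁ q := by
    intro q
    have e1 : pt (px T) q = κ q • pt N q + pt κ q • N q := by
      have hpx : px T = fun r => κ r • N r := funext hTx
      rw [hpx, pt_smul hκ hN q]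
    have e2 : px (pt T) q
        = (f₁ q • px N q + px f₁ q • N q) + (f₂ q • px B q + px f₂ q • B q) := by
      have hpt : pt T = fun r => f₁ r • N r + f₂ r • B r := funext hTt
      rw [hpt, px_smul_add_smul hf₁ hN hf₂ hB q]
    have e3 : dot3 (pt (px T) q) (B q) = dot3 (px (pt T) q) (B q) := by
      rw [pt_px_comm hT q]
    rw [e1, e2] at e3
    simp only [dot3_add_left, dot3_smul_left] at e3
    rw [horthNB q, hNxB q, hBxB q, horthBB q] at e3
    linear_combination e3
  -- first goal
  have goal1 : ∀ p, pt κ p = px f₁ p - τ p * f₂ p := by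
    intro p
    have hκeq : κ = fun q => dot3 (px T q) (N q) := by
      funext q
      rw [hTx q, dot3_smul_left, horthNN q, mul_one]
    have h := pt_dot3 hpxT hN p
    rw [← hκeq] at h
    have e2 : px (pt T) p
        = (f₁ p • px N p + px f₁ p • N p) + (f₂ p • px B p + px f₂ p • B p) := by
      have hpt : pt T = fun r => f₁ r • N r + f₂ r • B r := funext hTt
      rw [hpt, px_smul_add_smul hf₁ hN hf₂ hB p]
    rw [pt_px_comm hT p, e2, hTx p] at h
    rw [h]
    simp only [dot3_add_left, dot3_smul_left]
    rw [hNxN p, hBxN p, horthNN p, horthBN p]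
    have hNNt : dot3 (N p) (pt N p) = 0 := by
      rw [dot3_comm]; exact hNtN p
    rw [hNNt]
    ring
  refine ⟨goal1, ?_⟩
  -- second goal
  intro p
  have hτeq : τ = fun q => dot3 (px N q) (B q) := funext fun q => (hNxB q).symm
  have h := pt_dot3 hpxN hB p
  rw [← hτeq] at h
  rw [h, pt_px_comm hN p]
  have ht2 : dot3 (px N p) (pt B p) = κ p * f₂ p := by
    rw [hNx p]
    rw [dot3_add_left, dot3_smul_left, dot3_smul_left, hTBt p, hBtB p]
    ring
  have h4 := px_dot3 hptN hB p
  have h5 : dot3 (pt N p) (px B p) = 0 := by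
    rw [hBx p, dot3_smul_right, hNtN p, mul_zero]
  rw [h5, add_zero] at h4
  have hgeq : (fun q => dot3 (pt N q) (B q))
      = fun q => (κ q)⁻¹ * (px f₂ q + τ q * f₁ q) := by
    funext q
    rw [← hκg q, inv_mul_cancel_left₀ (hκpos q).ne']
  rw [hgeq] at h4
  rw [← h4, ht2]
end
end

section
/- Let T, E₂, E₃ : ℝ² → ℝ³ be smooth (C^∞) maps of (t,x) that are orthonormal at every point with E₃ = T × E₂, and let u₂, u₃ : ℝ² → ℝ be smooth functions satisfying the parallel-frame Frenet equations ∂_x T = u₂ E₂ + u₃ E₃, ∂_x E₂ = -u₂ T, ∂_x E₃ = -u₃ T at every (t,x). Suppose the tangent vector evolves by the +1 flow ∂_t T = -(∂_x u₃) E₂ + (∂_x u₂) E₃. Then T satisfies the Heisenberg ferromagnetic spin model ∂_t T = ∂_x( T × ∂_x T ) = T × ∂_x² T. -/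
noncomputable section

lemma cross3_add_right (a b c : Fin 3 → ℝ) :
    cross3 a (b + c) = cross3 a b + cross3 a c := by
  funext i; fin_cases i <;> simp [cross3] <;> ring

lemma cross3_smul_right (a b : Fin 3 → ℝ) (c : ℝ) :
    cross3 a (c • b) = c • cross3 a b := by
  funext i; fin_cases i <;> simp [cross3] <;> ring

lemma cross3_self (a : Fin 3 → ℝ) : cross3 a a = 0 := by
  funext i; fin_cases i <;> simp [cross3] <;> ring

lemma cross3_cross3 (a b : Fin 3 → ℝ) :
    cross3 a (cross3 a b) = dot3 a b • a - dot3 a a • b := by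
  funext i; fin_cases i <;> simp [cross3, dot3] <;> ring

lemma slice_hasDerivAt {F : Type*} [NormedAddCommGroup F] [NormedSpace ℝ F]
    {f : ℝ × ℝ → F} (hf : ContDiff ℝ (⊤ : ℕ∞) f) (p : ℝ × ℝ) :
    HasDerivAt (fun s => f (p.1, s)) (px f p) p.2 := by
  have h : DifferentiableAt ℝ (fun s => f (p.1, s)) p.2 := by
    have : DifferentiableAt ℝ f (p.1, p.2) := hf.differentiable (by simp) _
    exact this.comp p.2 (DifferentiableAt.prodMk (differentiableAt_const _) differentiableAt_id)
  exact h.hasDerivAt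

/-- In a parallel frame, the +1 flow `T_t = -(u₃)_x E₂ + (u₂)_x E₃` yields the
Heisenberg ferromagnetic spin model `T_t = (T × T_x)_x = T × T_xx`. -/
theorem plus_one_flow_heisenberg_model
    (T E₂ E₃ : ℝ × ℝ → Fin 3 → ℝ) (u₂ u₃ : ℝ × ℝ → ℝ)
    (hT : ContDiff ℝ (⊤ : ℕ∞) T) (hE₂ : ContDiff ℝ (⊤ : ℕ∞) E₂)
    (hE₃ : ContDiff ℝ (⊤ : ℕ∞) E₃)
    (hu₂ : ContDiff ℝ (⊤ : ℕ∞) u₂) (hu₃ : ContDiff ℝ (⊤ : ℕ∞) u₃)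
    (horthTT : ∀ p, dot3 (T p) (T p) = 1)
    (horth22 : ∀ p, dot3 (E₂ p) (E₂ p) = 1)
    (horth33 : ∀ p, dot3 (E₃ p) (E₃ p) = 1)
    (horthT2 : ∀ p, dot3 (T p) (E₂ p) = 0)
    (horthT3 : ∀ p, dot3 (T p) (E₃ p) = 0)
    (horth23 : ∀ p, dot3 (E₂ p) (E₃ p) = 0)
    (hE₃def : ∀ p, E₃ p = cross3 (T p) (E₂ p))
    (hTx : ∀ p, px T p = u₂ p • E₂ p + u₃ p • E₃ p)
    (hE₂x : ∀ p, px E₂ p = (-u₂ p) • T p)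
    (hE₃x : ∀ p, px E₃ p = (-u₃ p) • T p)
    (hTt : ∀ p, pt T p = (-(px u₃ p)) • E₂ p + (px u₂ p) • E₃ p) :
    ∀ p, pt T p = px (fun q => cross3 (T q) (px T q)) p ∧
      pt T p = cross3 (T p) (px (px T) p) := by
  -- cross products of frame vectors
  have hTE₂ : ∀ p, cross3 (T p) (E₂ p) = E₃ p := fun p => (hE₃def p).symm
  have hTE₃ : ∀ p, cross3 (T p) (E₃ p) = -E₂ p := by
    intro p
    rw [hE₃def p, cross3_cross3, horthT2, horthTT]
    simp
  intro p
  -- px T as a function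
  have hpxT : px T = fun q => u₂ q • E₂ q + u₃ q • E₃ q := funext hTx
  constructor
  · -- first identity
    have hV : (fun q => cross3 (T q) (px T q))
        = fun q => u₂ q • E₃ q + (-u₃ q) • E₂ q := by
      funext q
      rw [hTx q, cross3_add_right, cross3_smul_right, cross3_smul_right,
        hTE₂, hTE₃]
      module
    rw [hV]
    have h1 := ((slice_hasDerivAt hu₂ p).smul (slice_hasDerivAt hE₃ p)).add
      (((slice_hasDerivAt hu₃ p).neg).smul (slice_hasDerivAt hE₂ p))
    have : deriv (fun s => u₂ (p.1, s) • E₃ (p.1, s)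
      + (-u₃ (p.1, s)) • E₂ (p.1, s)) p.2 = _ := h1.deriv
    show pt T p = deriv (fun s => u₂ (p.1, s) • E₃ (p.1, s)
      + (-u₃ (p.1, s)) • E₂ (p.1, s)) p.2
    rw [this, hTt p, hE₂x p, hE₃x p]
    simp only [Pi.neg_apply]
    module
  · -- second identity
    have h1 := ((slice_hasDerivAt hu₂ p).smul (slice_hasDerivAt hE₂ p)).add
      ((slice_hasDerivAt hu₃ p).smul (slice_hasDerivAt hE₃ p))
    have h2 : px (px T) p = u₂ p • px E₂ p + px u₂ p • E₂ p
        + (u₃ p • px E₃ p + px u₃ p • E₃ p) := by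
      rw [hpxT]
      exact h1.deriv
    rw [h2, hE₂x p, hE₃x p, hTt p]
    have : u₂ p • (-u₂ p) • T p + px u₂ p • E₂ p
        + (u₃ p • (-u₃ p) • T p + px u₃ p • E₃ p)
        = px u₂ p • E₂ p + px u₃ p • E₃ p
          + (-(u₂ p * u₂ p) + -(u₃ p * u₃ p)) • T p := by module
    rw [this, cross3_add_right, cross3_add_right, cross3_smul_right,
      cross3_smul_right, cross3_smul_right, hTE₂, hTE₃, cross3_self]
    module
end
end
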